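/- Let n ≥ 2 be an integer and ω ∈ ℂ a primitive n-th root of unity. Set P₁ = ∏_{i=1}^{n−1} Δ(X, ω^i) and P₂ = ∏_{i=1}^{n−1} Δ(ω^i, X) in ℂ[X]. Then there do not exist a nonzero complex number c and natural numbers j, k such that X^j · P₁ = c · X^k · P₂. In particular, P₁ and P₂ do not agree up to multiplication by a unit of the Laurent polynomial ring ℂ[t, t⁻¹]. -/

import Mathlib

open Polynomial

/-- The two-variable Alexander polynomial `Δ` of the paper, written as a
function of two elements of `ℂ[X]` so that the one-variable substitutions
`Δ(X, b)` and `Δ(a, X)` are literal instances. -/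
noncomputable def Delta (x y : ℂ[X]) : ℂ[X] :=
  x^6 + x^5*y - 2*x^5 - x^4*y + x^3*y^2 - 2*x^4 - 3*x^3*y - 2*x^2*y^2
    + x^3 - x^2*y - 2*x*y^2 + x*y + y^2

lemma F1_monic (b : ℂ) : (Delta X (C b)).Monic := by
  unfold Delta; monicity!

lemma F1_natDegree (b : ℂ) : (Delta X (C b)).natDegree = 6 := by
  unfold Delta; compute_degree!

lemma F1_eval0 (b : ℂ) : (Delta X (C b)).eval 0 = b^2 := by
  simp [Delta]

lemma F2_repr (a : ℂ) : Delta (C a) X =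
    C (a^3-2*a^2-2*a+1) * X^2 + C (a*(a^4-a^3-3*a^2-a+1)) * X
      + C (a^3*(a^3-2*a^2-2*a+1)) := by
  unfold Delta
  simp only [map_add, map_mul, map_sub, map_pow, map_ofNat, map_one]
  ring

lemma F2_natDegree (a : ℂ) : (Delta (C a) X).natDegree ≤ 2 := by
  rw [F2_repr]; compute_degree

lemma F2_ne_zero (a : ℂ) (ha : a ≠ 0) : Delta (C a) X ≠ 0 := by
  intro h
  rw [F2_repr] at h
  have h2 := congrArg (fun p => Polynomial.coeff p 2) h
  have h1 := congrArg (fun p => Polynomial.coeff p 1) h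
  simp only [coeff_add, coeff_C_mul, coeff_X_pow, coeff_X, coeff_C, coeff_zero] at h2 h1
  norm_num at h2 h1
  have hr : a^4-a^3-3*a^2-a+1 = 0 := by
    rcases h1 with h | h
    · exact absurd h ha
    · exact h
  have : a^2 = 0 := by
    have : a^4-a^3-3*a^2-a+1 - (a+1)*(a^3-2*a^2-2*a+1) = a^2 := by ring
    rw [hr, h2] at this; linear_combination -this
  exact ha (pow_eq_zero_iff (by norm_num) |>.mp this)

/-- for `n ≥ 2` and `ω` a primitive `n`-th root of unity, the
polynomials `P₁ = ∏ Δ(X, ω^i)` and `P₂ = ∏ Δ(ω^i, X)` do not agree up to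
multiplication by a unit `c·t^{±m}` of the Laurent polynomial ring: there are
no nonzero `c : ℂ` and naturals `j, k` with `X^j · P₁ = c · X^k · P₂`. -/
theorem P1_P2_not_associated (n : ℕ) (hn : 2 ≤ n) (ω : ℂ)
    (hω : IsPrimitiveRoot ω n) :
    ¬ ∃ (c : ℂ) (j k : ℕ), c ≠ 0 ∧
      X^j * (∏ i ∈ Finset.Icc 1 (n-1), Delta X (C (ω^i)))
        = C c * (X^k * (∏ i ∈ Finset.Icc 1 (n-1), Delta (C (ω^i)) X)) := by
  rintro ⟨c, j, k, hc, heq⟩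
  set S := Finset.Icc 1 (n-1) with hS
  set Q1 := ∏ i ∈ S, Delta X (C (ω^i)) with hQ1
  set Q2 := ∏ i ∈ S, Delta (C (ω^i)) X with hQ2
  have hω0 : ω ≠ 0 := hω.ne_zero (by omega)
  have hQ1m : Q1.Monic := monic_prod_of_monic _ _ fun i _ => F1_monic _
  have hQ1ne : Q1 ≠ 0 := hQ1m.ne_zero
  have hQ2ne : Q2 ≠ 0 :=
    Finset.prod_ne_zero_iff.mpr fun i _ => F2_ne_zero _ (pow_ne_zero _ hω0)
  have hcard : S.card = n - 1 := by rw [hS, Nat.card_Icc]; omega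
  have hd1 : Q1.natDegree = 6 * (n-1) := by
    rw [hQ1, natDegree_prod _ _ (fun i _ => (F1_monic (ω^i)).ne_zero)]
    rw [Finset.sum_congr rfl (fun i _ => F1_natDegree (ω^i)), Finset.sum_const, hcard]
    ring
  have hd2 : Q2.natDegree ≤ 2 * (n-1) := by
    calc Q2.natDegree ≤ ∑ i ∈ S, (Delta (C (ω^i)) X).natDegree :=
          natDegree_prod_le _ _
      _ ≤ ∑ _i ∈ S, 2 := Finset.sum_le_sum fun i _ => F2_natDegree _
      _ = 2 * (n-1) := by rw [Finset.sum_const, hcard]; ring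
  have hXj : (X:ℂ[X])^j ≠ 0 := pow_ne_zero _ X_ne_zero
  have hXk : (X:ℂ[X])^k ≠ 0 := pow_ne_zero _ X_ne_zero
  have hCc : (C c : ℂ[X]) ≠ 0 := C_ne_zero.mpr hc
  -- degree comparison
  have hdeg : j + 6*(n-1) = k + Q2.natDegree := by
    have h := congrArg natDegree heq
    rw [natDegree_mul hXj hQ1ne, natDegree_X_pow, hd1,
      natDegree_mul hCc (mul_ne_zero hXk hQ2ne),
      natDegree_mul hXk hQ2ne, natDegree_C, natDegree_X_pow] at h
    omega
  -- root multiplicity at 0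
  have hev : Q1.eval 0 ≠ 0 := by
    rw [hQ1, eval_prod]
    exact Finset.prod_ne_zero_iff.mpr fun i _ => by
      rw [F1_eval0]; exact pow_ne_zero _ (pow_ne_zero _ hω0)
  have hXpow : ∀ m : ℕ, rootMultiplicity (0:ℂ) (X^m) = m := by
    intro m
    have : (X:ℂ[X])^m = (X - C 0)^m := by simp
    rw [this, rootMultiplicity_X_sub_C_pow]
  have hmult : j = k + rootMultiplicity 0 Q2 := by
    have h := congrArg (rootMultiplicity (0:ℂ)) heq
    rw [rootMultiplicity_mul (mul_ne_zero hXj hQ1ne),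
      rootMultiplicity_mul (mul_ne_zero hCc (mul_ne_zero hXk hQ2ne)),
      rootMultiplicity_mul (mul_ne_zero hXk hQ2ne),
      hXpow, hXpow,
      rootMultiplicity_eq_zero (p := Q1) (by simpa [IsRoot] using hev),
      rootMultiplicity_eq_zero (p := C c) (by simp [IsRoot, hc])] at h
    omega
  have hle : rootMultiplicity 0 Q2 ≤ Q2.natDegree := by
    have hdvd := pow_rootMultiplicity_dvd Q2 0
    have := natDegree_le_of_dvd hdvd hQ2ne
    simpa [natDegree_pow, natDegree_X_sub_C] using this
  omega
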